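/- Let r, g closed convex proper and f convex differentiable. A point z* satisfies p(z*) = 0 (i.e., is a fixed point of the PPG iteration with n = 1) if and only if x* = prox_{αr}(z*) minimizes r + f + g, with z* = x* + αν* where ν* ∈ ∂r(x*) satisfies −ν* ∈ ∇f(x*) + ∂g(x*). -/

import Mathlib

open Set Filter Topology
open scoped RealInnerProductSpace

noncomputable section

/-- `f` is closed (lower semicontinuous), convex, and proper
as an extended-real-valued function. -/
def ClosedConvexProper {E : Type*} [NormedAddCommGroup E] [NormedSpace ℝ E]
    (f : E → EReal) : Prop :=
  LowerSemicontinuous f ∧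
  (∀ (a b : ℝ) (x y : E), 0 ≤ a → 0 ≤ b → a + b = 1 →
    f (a • x + b • y) ≤ (a : EReal) * f x + (b : EReal) * f y) ∧
  (∀ x, f x ≠ ⊥) ∧ (∃ x, f x ≠ ⊤)

/-- `p` is a minimizer of the prox objective of the extended-real-valued `f` at `x₀`. -/
def IsProxPt {E : Type*} [NormedAddCommGroup E] [InnerProductSpace ℝ E]
    (f : E → EReal) (x₀ p : E) : Prop :=
  IsMinOn (fun x => f x + ((1 / 2 * ‖x - x₀‖ ^ 2 : ℝ) : EReal)) Set.univ p

/-- `p` is a minimizer of the prox objective of the real-valued `f` at `x₀`. -/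
def IsProxPtR {E : Type*} [NormedAddCommGroup E] [InnerProductSpace ℝ E]
    (f : E → ℝ) (x₀ p : E) : Prop :=
  IsMinOn (fun x => f x + 1 / 2 * ‖x - x₀‖ ^ 2) Set.univ p

variable {E : Type*} [NormedAddCommGroup E] [InnerProductSpace ℝ E]

lemma EReal.exists_real {x : EReal} (h1 : x ≠ ⊤) (h2 : x ≠ ⊥) : ∃ a : ℝ, x = (a : EReal) :=
  ⟨x.toReal, (EReal.coe_toReal h1 h2).symm⟩

/-- Gradient inequality for convex functions. -/
lemma grad_ineq [CompleteSpace E] {f : E → ℝ} (hf : ConvexOn ℝ Set.univ f) {x v : E}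
    (hx : HasGradientAt f v x) (y : E) : f x + ⟪v, y - x⟫ ≤ f y := by
  set φ : ℝ → E := fun t => x + t • (y - x) with hφ
  have hc : HasDerivAt φ (y - x) 0 := by
    convert ((hasDerivAt_id (0:ℝ)).smul_const (y - x)).const_add x using 1 <;> simp [hφ]
  have hd : HasDerivAt (f ∘ φ) ⟪v, y - x⟫ 0 := by
    have hfd : HasFDerivAt f ((InnerProductSpace.toDual ℝ E) v) (φ 0) := by
      simpa [hφ] using hx.hasFDerivAt
    simpa using hfd.comp_hasDerivAt 0 hc
  have hslope : ∀ t : ℝ, 0 < t → t < 1 → slope (f ∘ φ) 0 t ≤ f y - f x := by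
    intro t ht0 ht1
    have hcv := hf.2 (mem_univ x) (mem_univ y) (by linarith : (0:ℝ) ≤ 1 - t)
      ht0.le (by ring)
    have hpt : (1 - t) • x + t • y = φ t := by simp [hφ]; module
    rw [hpt] at hcv
    have : slope (f ∘ φ) 0 t = (f (φ t) - f x) / t := by
      simp [slope, hφ, Function.comp, div_eq_inv_mul]
    rw [this, div_le_iff₀ ht0]
    have : f (φ t) ≤ (1 - t) * f x + t * f y := by simpa [smul_eq_mul] using hcv
    nlinarith
  have htend : Tendsto (slope (f ∘ φ) 0) (𝓝[>] 0) (𝓝 ⟪v, y - x⟫) :=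
    ((hasDerivAt_iff_tendsto_slope).1 hd).mono_left
      (nhdsWithin_mono 0 (fun t ht => ne_of_gt ht))
  have hle : ⟪v, y - x⟫ ≤ f y - f x := by
    refine le_of_tendsto htend ?_
    filter_upwards [Ioo_mem_nhdsGT_of_mem (by norm_num : (0:ℝ) ∈ Ico 0 1)]
      with t ht using hslope t ht.1 ht.2
  linarith

/-- The prox point has finite value and satisfies the subgradient inequality. -/
lemma subgrad_of_prox {α : ℝ} (hα : 0 < α) {r : E → EReal}
    (hconv : ∀ (a b : ℝ) (x y : E), 0 ≤ a → 0 ≤ b → a + b = 1 →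
      r (a • x + b • y) ≤ (a : EReal) * r x + (b : EReal) * r y)
    (hbot : ∀ x, r x ≠ ⊥) (htop : ∃ x, r x ≠ ⊤)
    {w p : E} (hp : IsProxPt (fun x => (α : EReal) * r x) w p) :
    ∃ rp : ℝ, r p = (rp : EReal) ∧
      ∀ y, (rp : EReal) + ((⟪α⁻¹ • (w - p), y - p⟫ : ℝ) : EReal) ≤ r y := by
  obtain ⟨x₀, hx₀⟩ := htop
  have hmin : ∀ y, (α : EReal) * r p + ((1 / 2 * ‖p - w‖ ^ 2 : ℝ) : EReal)
      ≤ (α : EReal) * r y + ((1 / 2 * ‖y - w‖ ^ 2 : ℝ) : EReal) :=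
    fun y => isMinOn_iff.mp hp y (mem_univ y)
  obtain ⟨rx₀, hrx₀⟩ := EReal.exists_real hx₀ (hbot x₀)
  have hptop : r p ≠ ⊤ := by
    intro htp
    have h1 := hmin x₀
    rw [htp, EReal.mul_top_of_pos (by exact_mod_cast hα), EReal.top_add_coe,
      hrx₀, ← EReal.coe_mul, ← EReal.coe_add] at h1
    exact (EReal.coe_lt_top _).not_ge h1
  obtain ⟨rp, hrp⟩ := EReal.exists_real hptop (hbot p)
  refine ⟨rp, hrp, fun y => ?_⟩
  by_cases hy : r y = ⊤
  · rw [hy]; exact le_top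
  obtain ⟨ry, hry⟩ := EReal.exists_real hy (hbot y)
  rw [hry, ← EReal.coe_add, EReal.coe_le_coe_iff]
  -- key inequality for each t ∈ (0,1]
  have key : ∀ t : ℝ, 0 < t → t ≤ 1 →
      ⟪w - p, y - p⟫ ≤ α * (ry - rp) + t / 2 * ‖y - p‖ ^ 2 := by
    intro t ht0 ht1
    have hcv := hconv (1 - t) t p y (by linarith) ht0.le (by ring)
    rw [hrp, hry, ← EReal.coe_mul, ← EReal.coe_mul, ← EReal.coe_add] at hcv
    have hzt : (1 - t) • p + t • y = p + t • (y - p) := by module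
    rw [hzt] at hcv
    have hztop : r (p + t • (y - p)) ≠ ⊤ := fun h => by
      rw [h] at hcv; exact (EReal.coe_lt_top _).not_ge hcv
    obtain ⟨rz, hrz⟩ := EReal.exists_real hztop (hbot _)
    rw [hrz, EReal.coe_le_coe_iff] at hcv
    have hm := hmin (p + t • (y - p))
    rw [hrp, hrz, ← EReal.coe_mul, ← EReal.coe_mul, ← EReal.coe_add,
      ← EReal.coe_add, EReal.coe_le_coe_iff] at hm
    have hnorm : ‖p + t • (y - p) - w‖ ^ 2
        = ‖p - w‖ ^ 2 + 2 * (t * ⟪p - w, y - p⟫) + t ^ 2 * ‖y - p‖ ^ 2 := by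
      have h1 : p + t • (y - p) - w = (p - w) + t • (y - p) := by abel
      rw [h1, norm_add_sq_real, real_inner_smul_right, norm_smul]
      simp [mul_pow, sq_abs]
    rw [hnorm] at hm
    have hinner : ⟪w - p, y - p⟫ = -⟪p - w, y - p⟫ := by
      rw [← neg_sub p w, inner_neg_left]
    have hrz2 : α * rz ≤ α * ((1 - t) * rp + t * ry) :=
      mul_le_mul_of_nonneg_left hcv hα.le
    rw [hinner]
    have hN : (0:ℝ) ≤ ‖y - p‖ ^ 2 := sq_nonneg _
    nlinarith [hm, hrz2, mul_pos ht0 hα]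
  -- pass to the limit t → 0⁺
  have hfin : ⟪w - p, y - p⟫ ≤ α * (ry - rp) := by
    by_contra hcon
    push_neg at hcon
    set c := ⟪w - p, y - p⟫ with hc
    set D := α * (ry - rp) with hD
    set N := ‖y - p‖ ^ 2 with hN
    have hNpos : (0:ℝ) ≤ N := sq_nonneg _
    set t := min 1 ((c - D) / (N + 1)) with htdef
    have ht0 : 0 < t := lt_min one_pos (div_pos (by linarith) (by linarith))
    have ht1 : t ≤ 1 := min_le_left _ _
    have h2 := key t ht0 ht1
    have h3 : t ≤ (c - D) / (N + 1) := min_le_right _ _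
    have h4 : t * N ≤ (c - D) := by
      have : t * (N + 1) ≤ c - D := by
        rw [← div_mul_cancel₀ (c - D) (by linarith : N + 1 ≠ 0)]
        exact mul_le_mul_of_nonneg_right h3 (by linarith)
      nlinarith
    nlinarith
  have hi2 : ⟪α⁻¹ • (w - p), y - p⟫ = α⁻¹ * ⟪w - p, y - p⟫ := real_inner_smul_left _ _ _
  rw [hi2]
  have := mul_le_mul_of_nonneg_left hfin (inv_nonneg.mpr hα.le)
  rw [← mul_assoc, inv_mul_cancel₀ hα.ne', one_mul] at this
  linarith

/-- A subgradient identifies the prox point. -/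
lemma prox_eq_of_subgrad {α : ℝ} (hα : 0 < α) {r : E → EReal}
    (hconv : ∀ (a b : ℝ) (x y : E), 0 ≤ a → 0 ≤ b → a + b = 1 →
      r (a • x + b • y) ≤ (a : EReal) * r x + (b : EReal) * r y)
    (hbot : ∀ x, r x ≠ ⊥) (htop : ∃ x, r x ≠ ⊤)
    {p u q : E}
    (hsub : ∀ y, r p + ((⟪u, y - p⟫ : ℝ) : EReal) ≤ r y)
    (hq : IsProxPt (fun x => (α : EReal) * r x) (p + α • u) q) : q = p := by
  obtain ⟨rq, hrq, hq'⟩ := subgrad_of_prox hα hconv hbot htop hq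
  obtain ⟨x₀, hx₀⟩ := htop
  obtain ⟨rx₀, hrx₀⟩ := EReal.exists_real hx₀ (hbot x₀)
  have hptop : r p ≠ ⊤ := by
    intro htp
    have h1 := hsub x₀
    rw [htp, EReal.top_add_coe, hrx₀] at h1
    exact (EReal.coe_lt_top _).not_ge h1
  obtain ⟨rp, hrp⟩ := EReal.exists_real hptop (hbot p)
  have h1 := hq' p
  rw [hrp, ← EReal.coe_add, EReal.coe_le_coe_iff] at h1
  have h2 := hsub q
  rw [hrp, hrq, ← EReal.coe_add, EReal.coe_le_coe_iff] at h2
  have hvec : α⁻¹ • (p + α • u - q) = α⁻¹ • (p - q) + u := by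
    rw [show p + α • u - q = (p - q) + α • u by abel, smul_add, ← smul_assoc]
    simp [inv_mul_cancel₀ hα.ne']
  rw [hvec] at h1
  have hi1 : ⟪α⁻¹ • (p - q) + u, p - q⟫ = α⁻¹ * ‖p - q‖ ^ 2 + ⟪u, p - q⟫ := by
    rw [inner_add_left, real_inner_smul_left, real_inner_self_eq_norm_sq]
  have hi2 : ⟪u, q - p⟫ = -⟪u, p - q⟫ := by
    rw [← neg_sub p q, inner_neg_right]
  rw [hi1] at h1
  rw [hi2] at h2
  have : α⁻¹ * ‖p - q‖ ^ 2 ≤ 0 := by linarith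
  have hpq : ‖p - q‖ ^ 2 ≤ 0 := by
    nlinarith [inv_pos.mpr hα]
  have : p - q = 0 := by
    have := sq_nonneg ‖p - q‖
    have h0 : ‖p - q‖ ^ 2 = 0 := le_antisymm hpq this
    simpa using h0
  exact (sub_eq_zero.mp this).symm
/-- Fixed points of the PPG iteration encode primal-dual solutions. -/
theorem stmt16
    {d : ℕ} (α : ℝ) (hα : 0 < α)
    (r g : EuclideanSpace ℝ (Fin d) → EReal)
    (hr : ClosedConvexProper r) (hg : ClosedConvexProper g)
    (f : EuclideanSpace ℝ (Fin d) → ℝ) (hfconv : ConvexOn ℝ Set.univ f)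
    (f' : EuclideanSpace ℝ (Fin d) → EuclideanSpace ℝ (Fin d))
    (hf' : ∀ x, HasGradientAt f (f' x) x)
    (Pr Pg : EuclideanSpace ℝ (Fin d) → EuclideanSpace ℝ (Fin d))
    (hPr : ∀ w, IsProxPt (fun x => (α : EReal) * r x) w (Pr w))
    (hPg : ∀ w, IsProxPt (fun x => (α : EReal) * g x) w (Pg w))
    (P : EuclideanSpace ℝ (Fin d) → EuclideanSpace ℝ (Fin d))
    (hP : ∀ z, P z = α⁻¹ • (Pr z - Pg ((2 : ℝ) • Pr z - z - α • f' (Pr z))))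
    (zs : EuclideanSpace ℝ (Fin d)) :
    P zs = 0 ↔
      (IsMinOn (fun x => r x + (f x : EReal) + g x) Set.univ (Pr zs) ∧
        ∃ ν u : EuclideanSpace ℝ (Fin d),
          (∀ y, r (Pr zs) + ((⟪ν, y - Pr zs⟫ : ℝ) : EReal) ≤ r y) ∧
          (∀ y, g (Pr zs) + ((⟪u, y - Pr zs⟫ : ℝ) : EReal) ≤ g y) ∧
          zs = Pr zs + α • ν ∧ -ν = f' (Pr zs) + u) := by
  obtain ⟨-, hrconv, hrbot, hrtop⟩ := hr
  obtain ⟨-, hgconv, hgbot, hgtop⟩ := hg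
  set x := Pr zs with hx
  set w' := (2 : ℝ) • x - zs - α • f' x with hw'
  obtain ⟨rp, hrp, hν⟩ := subgrad_of_prox hα hrconv hrbot hrtop (hPr zs)
  set ν : EuclideanSpace ℝ (Fin d) := α⁻¹ • (zs - x) with hνdef
  have hzν : zs = x + α • ν := by
    rw [hνdef, smul_inv_smul₀ hα.ne']; abel
  constructor
  · intro hP0
    have hPg0 : Pg w' = x := by
      have h := hP zs
      rw [hP0] at h
      have h2 : x - Pg w' = 0 := by
        rcases smul_eq_zero.mp h.symm with h3 | h3
        · exact absurd h3 (inv_ne_zero hα.ne')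
        · exact h3
      have := sub_eq_zero.mp h2
      exact this.symm
    obtain ⟨gp, hgp, hu⟩ := subgrad_of_prox hα hgconv hgbot hgtop (hPg w')
    rw [hPg0] at hgp hu
    set u : EuclideanSpace ℝ (Fin d) := α⁻¹ • (w' - x) with hudef
    have hw'x : w' - x = (x - zs) - α • f' x := by rw [hw']; module
    have hu2 : u = α⁻¹ • (x - zs) - f' x := by
      rw [hudef, hw'x, smul_sub, smul_smul, inv_mul_cancel₀ hα.ne', one_smul]
    have hnu : -ν = f' x + u := by rw [hu2, hνdef]; module
    have hνsub : ∀ y, r x + ((⟪ν, y - x⟫ : ℝ) : EReal) ≤ r y := by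
      intro y; rw [hrp]; exact hν y
    have husub : ∀ y, g x + ((⟪u, y - x⟫ : ℝ) : EReal) ≤ g y := by
      intro y; rw [hgp]; exact hu y
    refine ⟨?_, ν, u, hνsub, husub, hzν, hnu⟩
    apply isMinOn_iff.mpr
    intro y _
    have hfy := grad_ineq hfconv (hf' x) y
    have hν2 : ν = -(f' x + u) := by rw [← hnu, neg_neg]
    have hcancel : ⟪ν, y - x⟫ + ⟪f' x, y - x⟫ + ⟪u, y - x⟫ = 0 := by
      rw [hν2, inner_neg_left, inner_add_left]; ring
    simp only [hrp, hgp]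
    rw [hrp]
    have h2' : ((f x + ⟪f' x, y - x⟫ : ℝ) : EReal) ≤ ((f y : ℝ) : EReal) :=
      EReal.coe_le_coe_iff.mpr hfy
    have hs := add_le_add (add_le_add (hν y) h2') (hu y)
    have hEq : ((rp : ℝ) : EReal) + ((f x : ℝ) : EReal) + ((gp : ℝ) : EReal)
        = (((rp : ℝ) : EReal) + ((⟪ν, y - x⟫ : ℝ) : EReal))
          + ((f x + ⟪f' x, y - x⟫ : ℝ) : EReal)
          + (((gp : ℝ) : EReal) + ((⟪u, y - x⟫ : ℝ) : EReal)) := by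
      norm_cast
      linarith [hcancel]
    rw [hEq]; exact hs
  · rintro ⟨-, ν', u', hνs, hus, hz, hnu⟩
    have huval : u' = -ν' - f' x := by rw [hnu]; abel
    have hw'eq : w' = x + α • u' := by
      rw [hw', hz, huval]; module
    have hq : IsProxPt (fun y => (α : EReal) * g y) (x + α • u') (Pg w') := by
      rw [← hw'eq]; exact hPg w'
    have hPg0 : Pg w' = x := prox_eq_of_subgrad hα hgconv hgbot hgtop hus hq
    rw [hP zs]
    rw [← hw', hPg0, sub_self, smul_zero]
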